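/- In the setting of the previous proposition, the set A₀ = {x** ∈ X** : ‖x**‖ + ‖R**x**‖ < 1} is contained in the weak*-closure of the canonical image of B = {x ∈ X : ‖x‖ + ‖Rx‖ ≤ 1}. -/

import Mathlib

set_option maxHeartbeats 1000000

open Filter Topology NormedSpace

variable {X Y : Type*} [NormedAddCommGroup X] [NormedSpace ℝ X]
  [NormedAddCommGroup Y] [NormedSpace ℝ Y]

section EvalAux
variable {E : Type*} [NormedAddCommGroup E] [NormedSpace ℝ E]

noncomputable def evalLM (y : E) : WeakDual ℝ E →ₗ[ℝ] ℝ where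
  toFun := fun φ => φ y
  map_add' := fun _ _ => rfl
  map_smul' := fun _ _ => rfl

@[simp] theorem evalLM_apply (y : E) (φ : WeakDual ℝ E) : evalLM y φ = φ y := rfl

instance weakDual_locallyConvex : LocallyConvexSpace ℝ (WeakDual ℝ E) :=
  WeakBilin.locallyConvexSpace (B := topDualPairing ℝ E)

theorem weakdual_dual_eval (L : WeakDual ℝ E →L[ℝ] ℝ) :
    ∃ f : E, ∀ φ : WeakDual ℝ E, L φ = φ f := by
  classical
  set ι : WeakDual ℝ E → (E → ℝ) := fun φ y => φ y with hι
  have h1 : {φ : WeakDual ℝ E | |L φ| < 1} ∈ 𝓝 (0 : WeakDual ℝ E) := by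
    have h : Tendsto L (𝓝 0) (𝓝 0) := by
      simpa using L.continuous.tendsto 0
    have h2 := h (Metric.ball_mem_nhds (0 : ℝ) one_pos)
    have : ⇑L ⁻¹' Metric.ball 0 1 = {φ : WeakDual ℝ E | |L φ| < 1} := by
      ext φ; simp [Real.dist_eq]
    rw [Filter.mem_map] at h2
    rwa [this] at h2
  have hnhds : 𝓝 (0 : WeakDual ℝ E) = Filter.comap ι (𝓝 (ι 0)) := nhds_induced ι 0
  rw [hnhds, Filter.mem_comap] at h1
  obtain ⟨U, hU, hUsub⟩ := h1
  have hι0 : ι 0 = fun _ => (0 : ℝ) := rfl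
  rw [hι0, nhds_pi, Filter.mem_pi] at hU
  obtain ⟨I, hIfin, t, ht, hItsub⟩ := hU
  have hker : ∀ φ : WeakDual ℝ E, (∀ y ∈ I, φ y = 0) → L φ = 0 := by
    intro φ hφ
    by_contra hne
    have hall : ∀ c : ℝ, |c| * |L φ| < 1 := by
      intro c
      have hmem : ι (c • φ) ∈ I.pi t := by
        intro y hy
        have : (c • φ) y = c * φ y := rfl
        simp only [ι, this, hφ y hy, mul_zero]
        exact mem_of_mem_nhds (ht y)
      have := hUsub (hItsub hmem)
      simpa [abs_mul, map_smul] using this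
    have := hall (1 / L φ)
    rw [abs_div, div_mul_cancel₀] at this
    · simp at this
    · exact abs_ne_zero.mpr hne
  haveI : Finite I := hIfin.to_subtype
  haveI : Fintype I := Fintype.ofFinite I
  have hsub : ⨅ i : I, LinearMap.ker (evalLM (i : E)) ≤
      LinearMap.ker (L : WeakDual ℝ E →ₗ[ℝ] ℝ) := by
    intro φ hφ
    rw [Submodule.mem_iInf] at hφ
    exact hker φ fun y hy => hφ ⟨y, hy⟩
  have hspan := mem_span_of_iInf_ker_le_ker (L := fun i : I => evalLM (i : E)) hsub
  rw [Submodule.mem_span_range_iff_exists_fun] at hspan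
  obtain ⟨c, hc⟩ := hspan
  refine ⟨∑ i : I, c i • (i : E), fun φ => ?_⟩
  have h3 : L φ = (∑ i : I, c i • evalLM ((i : I) : E)) φ := by rw [hc]; rfl
  rw [h3, map_sum]
  simp only [LinearMap.sum_apply, LinearMap.smul_apply, evalLM_apply, map_smul,
    smul_eq_mul]

end EvalAux

/-- The conjugate (dual) operator `R* : Y* → X*` of a bounded operator `R : X → Y`. -/
noncomputable def conjOp (R : X →L[ℝ] Y) : StrongDual ℝ Y →L[ℝ] StrongDual ℝ X :=
  (ContinuousLinearMap.compL ℝ X Y ℝ).flip R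

theorem conjOp_apply (R : X →L[ℝ] Y) (h : StrongDual ℝ Y) (x : X) :
    conjOp R h x = h (R x) := rfl

/-- The biconjugate operator `R** : X** → Y**`. -/
noncomputable def biconjOp (R : X →L[ℝ] Y) : StrongDual ℝ (StrongDual ℝ X) →L[ℝ] StrongDual ℝ (StrongDual ℝ Y) :=
  conjOp (conjOp R)

theorem exists_decomp (R : X →L[ℝ] Y) (f : StrongDual ℝ X)
    (hf : ∀ x, |f x| ≤ ‖x‖ + ‖R x‖) :
    ∃ (g : StrongDual ℝ X) (h : StrongDual ℝ Y), ‖g‖ ≤ 1 ∧ ‖h‖ ≤ 1 ∧ f = g + conjOp R h := by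
  set G : Submodule ℝ (X × Y) := LinearMap.graph (R : X →ₗ[ℝ] Y) with hG
  set pf : (X × Y) →ₗ.[ℝ] ℝ :=
    ⟨G, (f : X →ₗ[ℝ] ℝ) ∘ₗ (LinearMap.fst ℝ X Y) ∘ₗ G.subtype⟩ with hpf
  have key := exists_extension_of_le_sublinear pf (fun p => ‖p.1‖ + ‖p.2‖)
    (fun c hc p => by
      simp [norm_smul, Real.norm_eq_abs, abs_of_pos hc, mul_add])
    (fun p q => by
      calc ‖(p + q).1‖ + ‖(p + q).2‖ ≤ (‖p.1‖ + ‖q.1‖) + (‖p.2‖ + ‖q.2‖) :=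
            add_le_add (norm_add_le _ _) (norm_add_le _ _)
        _ = _ := by ring)
    (fun z => by
      have hz : (z : X × Y).2 = R (z : X × Y).1 := by
        exact (LinearMap.mem_graph_iff _ _).mp z.2
      show f (z : X × Y).1 ≤ ‖(z : X × Y).1‖ + ‖(z : X × Y).2‖
      rw [hz]
      exact (le_abs_self _).trans (hf _))
  obtain ⟨F, hFeq, hFle⟩ := key
  have hg : ∀ x : X, |F (x, 0)| ≤ ‖x‖ := by
    intro x
    rw [abs_le]
    constructor
    · have := hFle (-x, 0)
      have h2 : F (-x, 0) = -F (x, 0) := by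
        rw [← F.map_neg]; norm_num
      simp only [norm_neg, norm_zero, add_zero] at this
      rw [h2] at this; linarith
    · have := hFle (x, 0); simpa using this
  have hh : ∀ y : Y, |F (0, y)| ≤ ‖y‖ := by
    intro y
    rw [abs_le]
    constructor
    · have := hFle (0, -y)
      have h2 : F (0, -y) = -F (0, y) := by
        rw [← F.map_neg]; norm_num
      simp only [norm_neg, norm_zero, zero_add] at this
      rw [h2] at this; linarith
    · have := hFle (0, y); simpa using this
  set g : StrongDual ℝ X := LinearMap.mkContinuous (F ∘ₗ LinearMap.inl ℝ X Y) 1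
    (fun x => by simpa using (hg x)) with hgdef
  set h : StrongDual ℝ Y := LinearMap.mkContinuous (F ∘ₗ LinearMap.inr ℝ X Y) 1
    (fun y => by simpa using (hh y)) with hhdef
  refine ⟨g, h, ?_, ?_, ?_⟩
  · exact LinearMap.mkContinuous_norm_le _ zero_le_one _
  · exact LinearMap.mkContinuous_norm_le _ zero_le_one _
  · ext x
    have hmem : ((x, R x) : X × Y) ∈ G :=
      (LinearMap.mem_graph_iff _ _).mpr rfl
    have h1 : f x = F (x, R x) := by
      have := hFeq ⟨(x, R x), hmem⟩
      exact (this.symm : _)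
    have h2 : F (x, R x) = F (x, 0) + F (0, R x) := by
      rw [← F.map_add]; norm_num
    show f x = g x + conjOp R h x
    rw [conjOp_apply, h1, h2]
    rfl

/-- The set `A₀ = {x** : ‖x**‖ + ‖R** x**‖ < 1}` is contained in the weak*-closure of the
canonical image of `B = {x : ‖x‖ + ‖Rx‖ ≤ 1}`. -/
theorem strict_ball_subset_weak_star_closure
    [CompleteSpace X] [CompleteSpace Y] (R : X →L[ℝ] Y) :
    {φ : WeakDual ℝ (StrongDual ℝ X) | ‖WeakDual.toStrongDual φ‖ +
        ‖biconjOp R (WeakDual.toStrongDual φ)‖ < 1} ⊆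
      closure {φ : WeakDual ℝ (StrongDual ℝ X) | ∃ x : X, ‖x‖ + ‖R x‖ ≤ 1 ∧
        φ = StrongDual.toWeakDual (inclusionInDoubleDual ℝ X x)} := by
  intro φ hφ
  simp only [Set.mem_setOf_eq] at hφ
  by_contra hc
  set S : Set (WeakDual ℝ (StrongDual ℝ X)) := {ψ | ∃ x : X, ‖x‖ + ‖R x‖ ≤ 1 ∧
    ψ = StrongDual.toWeakDual (inclusionInDoubleDual ℝ X x)} with hSdef
  -- the linear map from X to the weak dual
  set j : X →ₗ[ℝ] WeakDual ℝ (StrongDual ℝ X) :=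
    (StrongDual.toWeakDual.toLinearMap : StrongDual ℝ (StrongDual ℝ X) →ₗ[ℝ] WeakDual ℝ (StrongDual ℝ X)) ∘ₗ
      ((inclusionInDoubleDual ℝ X : X →L[ℝ] StrongDual ℝ (StrongDual ℝ X)) : X →ₗ[ℝ] StrongDual ℝ (StrongDual ℝ X))
    with hjdef
  have hB0conv : Convex ℝ {x : X | ‖x‖ + ‖R x‖ ≤ 1} := by
    intro x hx y hy a b ha hb hab
    simp only [Set.mem_setOf_eq] at hx hy ⊢
    have h1 : ‖a • x + b • y‖ ≤ a * ‖x‖ + b * ‖y‖ := by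
      refine (norm_add_le _ _).trans ?_
      rw [norm_smul, norm_smul, Real.norm_eq_abs, Real.norm_eq_abs,
        abs_of_nonneg ha, abs_of_nonneg hb]
    have h2 : ‖R (a • x + b • y)‖ ≤ a * ‖R x‖ + b * ‖R y‖ := by
      rw [map_add, map_smul, map_smul]
      refine (norm_add_le _ _).trans ?_
      rw [norm_smul, norm_smul, Real.norm_eq_abs, Real.norm_eq_abs,
        abs_of_nonneg ha, abs_of_nonneg hb]
    have h3 : a * (‖x‖ + ‖R x‖) ≤ a * 1 := mul_le_mul_of_nonneg_left hx ha
    have h4 : b * (‖y‖ + ‖R y‖) ≤ b * 1 := mul_le_mul_of_nonneg_left hy hb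
    nlinarith
  have hSimg : S = j '' {x : X | ‖x‖ + ‖R x‖ ≤ 1} := by
    ext ψ
    constructor
    · rintro ⟨x, hx, rfl⟩
      exact ⟨x, hx, rfl⟩
    · rintro ⟨x, hx, rfl⟩
      exact ⟨x, hx, rfl⟩
  have hSconv : Convex ℝ (closure S) := by
    rw [hSimg]
    exact @Convex.closure ℝ (WeakDual ℝ (StrongDual ℝ X)) _ _ _ _ _ _ _ _ (hB0conv.linear_image j)
  obtain ⟨L, u, hLS, hLφ⟩ := geometric_hahn_banach_closed_point hSconv isClosed_closure hc
  obtain ⟨f, hfL⟩ := weakdual_dual_eval L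
  have h0S : (0 : WeakDual ℝ (StrongDual ℝ X)) ∈ S := by
    refine ⟨0, by simp, ?_⟩
    rw [map_zero]
    rfl
  have hu : 0 < u := by
    have := hLS 0 (subset_closure h0S)
    rwa [map_zero] at this
  -- all elements of B₀ satisfy f x < u
  have hfu : ∀ x : X, ‖x‖ + ‖R x‖ ≤ 1 → f x < u := by
    intro x hx
    have hmem : j x ∈ S := ⟨x, hx, rfl⟩
    have := hLS (j x) (subset_closure hmem)
    rw [hfL] at this
    exact this
  have habs : ∀ x : X, ‖x‖ + ‖R x‖ ≤ 1 → |f x| ≤ u := by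
    intro x hx
    rw [abs_le]
    constructor
    · have hx' : ‖-x‖ + ‖R (-x)‖ ≤ 1 := by simpa using hx
      have := hfu (-x) hx'
      rw [map_neg] at this
      linarith
    · exact (hfu x hx).le
  set f' : StrongDual ℝ X := u⁻¹ • f with hf'def
  have hbound : ∀ x : X, |f' x| ≤ ‖x‖ + ‖R x‖ := by
    intro x
    refine le_of_forall_pos_le_add fun ε hε => ?_
    set c : ℝ := ‖x‖ + ‖R x‖ + ε with hcdef
    have hc0 : 0 < c := by positivity
    have hxc : ‖c⁻¹ • x‖ + ‖R (c⁻¹ • x)‖ ≤ 1 := by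
      rw [map_smul, norm_smul, norm_smul, Real.norm_eq_abs,
        abs_of_pos (inv_pos.mpr hc0), ← mul_add]
      rw [inv_mul_le_iff₀ hc0, mul_one, hcdef]
      linarith
    have h1 : |f (c⁻¹ • x)| ≤ u := habs _ hxc
    have h2 : f (c⁻¹ • x) = c⁻¹ * f x := by rw [map_smul]; rfl
    rw [h2, abs_mul, abs_of_pos (inv_pos.mpr hc0)] at h1
    have h3 : |f x| ≤ c * u := by
      rw [inv_mul_le_iff₀ hc0] at h1
      exact h1
    have h4 : |f' x| = u⁻¹ * |f x| := by
      rw [hf'def]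
      show |u⁻¹ * f x| = u⁻¹ * |f x|
      rw [abs_mul, abs_of_pos (inv_pos.mpr hu)]
    rw [h4]
    calc u⁻¹ * |f x| ≤ u⁻¹ * (c * u) :=
          mul_le_mul_of_nonneg_left h3 (inv_pos.mpr hu).le
      _ = c := by field_simp
  obtain ⟨g, h, hg, hh, hdecomp⟩ := exists_decomp R f' hbound
  set Φ : StrongDual ℝ (StrongDual ℝ X) := WeakDual.toStrongDual φ with hΦ
  have key : |φ f'| < 1 := by
    have h1 : φ f' = Φ g + (biconjOp R Φ) h := by
      rw [hdecomp]
      show φ (g + conjOp R h) = Φ g + (biconjOp R Φ) h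
      rw [map_add]
      rfl
    have h2 : |Φ g| ≤ ‖Φ‖ := by
      calc |Φ g| ≤ ‖Φ‖ * ‖g‖ := Φ.le_opNorm g
        _ ≤ ‖Φ‖ * 1 := mul_le_mul_of_nonneg_left hg (by positivity)
        _ = ‖Φ‖ := mul_one _
    have h3 : |(biconjOp R Φ) h| ≤ ‖biconjOp R Φ‖ := by
      calc |(biconjOp R Φ) h| ≤ ‖biconjOp R Φ‖ * ‖h‖ := (biconjOp R Φ).le_opNorm h
        _ ≤ ‖biconjOp R Φ‖ * 1 := mul_le_mul_of_nonneg_left hh (by positivity)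
        _ = ‖biconjOp R Φ‖ := mul_one _
    rw [h1]
    calc |Φ g + (biconjOp R Φ) h| ≤ |Φ g| + |(biconjOp R Φ) h| := abs_add_le _ _
      _ ≤ ‖Φ‖ + ‖biconjOp R Φ‖ := add_le_add h2 h3
      _ < 1 := hφ
  -- but φ f' > 1
  have hgt : 1 < φ f' := by
    have h1 : φ f' = u⁻¹ * φ f := by
      rw [hf'def]
      show φ (u⁻¹ • f) = u⁻¹ * φ f
      rw [map_smul]
      rfl
    have h2 : u < φ f := by rwa [hfL] at hLφ
    rw [h1]
    rw [lt_inv_mul_iff₀ hu]  -- 1 < u⁻¹ * φ f ↔ u * 1 < φ f ?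
    linarith
  have := key.trans_le (le_abs_self _)
  -- contradiction
  exact absurd hgt (by linarith [le_abs_self (φ f'), key])
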